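/- arXiv:2104.12260 — 2 statements merged into one kernel-verified Lean document; each statement's English description precedes it below -/
import Mathlib

section
/- Let n, n' ≥ 1, d = n + n', and w ∈ ℝ^d defined by wᵢ = −1/n for i ≤ n and wᵢ = 1/n' for i > n. If Π is a uniformly random d×d permutation matrix, then E[(wᵀΠw)²] = ‖w‖₂⁴ / (d−1). -/
open Finset Equiv

private lemma exists_perm_pair {α : Type*} [DecidableEq α]
    {a b c e : α} (hab : a ≠ b) (hce : c ≠ e) :
    ∃ σ : Equiv.Perm α, σ a = c ∧ σ b = e := by
  refine ⟨Equiv.swap (Equiv.swap a c b) e * Equiv.swap a c, ?_, ?_⟩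
  · have h1 : c ≠ Equiv.swap a c b := by
      intro h
      have := (Equiv.swap a c).injective ((Equiv.swap_apply_left a c).trans h)
      exact hab this
    simp only [Equiv.Perm.mul_apply, Equiv.swap_apply_left]
    exact Equiv.swap_apply_of_ne_of_ne h1 hce
  · simp only [Equiv.Perm.mul_apply, Equiv.swap_apply_left]

private lemma sum_perm_mulRight {α : Type*} [DecidableEq α] [Fintype α]
    (σ : Equiv.Perm α) (f : Equiv.Perm α → ℝ) :
    ∑ π : Equiv.Perm α, f (π * σ) = ∑ π : Equiv.Perm α, f π :=
  Equiv.sum_comp (Equiv.mulRight σ) f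

/-- Let `d = n + n'` and `w ∈ ℝ^d` with `wᵢ = -1/n` for `i ≤ n` and `wᵢ = 1/n'`
otherwise. For a uniformly random permutation matrix `Π`,
`E[(wᵀ Π w)²] = ‖w‖₂⁴ / (d - 1)`. Here `wᵀ Π w = ∑ i, w i * w (π i)`, and the
expectation is the average over all `d!` permutations. -/
theorem permutation_quadratic_form_second_moment
    (n n' : ℕ) (hn : 1 ≤ n) (hn' : 1 ≤ n') :
    let d := n + n'
    let w : Fin d → ℝ := fun i => if (i : ℕ) < n then -1 / n else 1 / n'
    (∑ π : Equiv.Perm (Fin d), (∑ i, w i * w (π i)) ^ 2) / (Nat.factorial d : ℝ) =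
      (∑ i, (w i) ^ 2) ^ 2 / ((d : ℝ) - 1) := by
  intro d w
  have hd : d = n + n' := rfl
  have hd2 : 2 ≤ d := by rw [hd]; omega
  -- sum of w is zero
  have hwdef : ∀ i : Fin d, w i = if (i : ℕ) < n then (-1 / n : ℝ) else 1 / n' := fun i => rfl
  have hw0 : ∑ i, w i = 0 := by
    have h1 : ∑ i, w i = ∑ i ∈ Finset.range d, (if i < n then (-1 / n : ℝ) else 1 / n') := by
      simp only [hwdef]
      exact Fin.sum_univ_eq_sum_range (fun i => if i < n then (-1 / n : ℝ) else 1 / n') d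
    rw [h1, Finset.range_eq_Ico,
      ← Finset.sum_Ico_consecutive _ (Nat.zero_le n) (by omega : n ≤ d)]
    have e1 : ∑ i ∈ Finset.Ico 0 n, (if i < n then (-1 / n : ℝ) else 1 / n') = n * (-1 / n) := by
      rw [Finset.sum_congr rfl (fun i hi => by
        rw [if_pos (Finset.mem_Ico.mp hi).2]), Finset.sum_const]
      simp [Nat.card_Ico]
    have e2 : ∑ i ∈ Finset.Ico n d, (if i < n then (-1 / n : ℝ) else 1 / n') = n' * (1 / n') := by
      rw [Finset.sum_congr rfl (fun i hi => by
        rw [if_neg (by exact Nat.not_lt.mpr (Finset.mem_Ico.mp hi).1)]), Finset.sum_const]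
      have : (Finset.Ico n d).card = n' := by rw [Nat.card_Ico]; omega
      rw [this]; simp
    rw [e1, e2]
    have hn0 : (n : ℝ) ≠ 0 := Nat.cast_ne_zero.mpr (by omega)
    have hn'0 : (n' : ℝ) ≠ 0 := Nat.cast_ne_zero.mpr (by omega)
    field_simp
    norm_num
  set S : ℝ := ∑ i, w i ^ 2 with hS
  set A : Fin d → Fin d → ℝ := fun i j => ∑ π : Equiv.Perm (Fin d), w (π i) * w (π j) with hA
  -- A is constant given a permutation moving index pairs
  have key : ∀ (i j i' j' : Fin d), (∃ σ : Equiv.Perm (Fin d), σ i' = i ∧ σ j' = j) →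
      A i j = A i' j' := by
    rintro i j i' j' ⟨σ, h1, h2⟩
    calc A i j = ∑ π : Equiv.Perm (Fin d), w ((π * σ) i') * w ((π * σ) j') := by
          simp only [hA, Equiv.Perm.mul_apply, h1, h2]
      _ = A i' j' := sum_perm_mulRight σ (fun π => w (π i') * w (π j'))
  obtain ⟨i0, j0, hij⟩ : ∃ i j : Fin d, i ≠ j :=
    ⟨⟨0, by omega⟩, ⟨1, by omega⟩, by simp [Fin.ext_iff]⟩
  set a : ℝ := A i0 i0 with ha_def
  set c : ℝ := A i0 j0 with hc_def
  have hdiag : ∀ i, A i i = a := fun i =>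
    key i i i0 i0 ⟨Equiv.swap i0 i, Equiv.swap_apply_left i0 i, Equiv.swap_apply_left i0 i⟩
  have hoff : ∀ i j, i ≠ j → A i j = c := fun i j hijne =>
    key i j i0 j0 (exists_perm_pair hij hijne)
  -- diagonal sum
  have hsumdiag : ∑ i, A i i = (d.factorial : ℝ) * S := by
    calc ∑ i, A i i = ∑ i, ∑ π : Equiv.Perm (Fin d), w (π i) * w (π i) := rfl
      _ = ∑ π : Equiv.Perm (Fin d), ∑ i, w (π i) * w (π i) := Finset.sum_comm
      _ = ∑ _π : Equiv.Perm (Fin d), S := by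
          refine Finset.sum_congr rfl fun π _ => ?_
          rw [hS]
          simpa only [← pow_two] using Equiv.sum_comp π (fun k => w k ^ 2)
      _ = (d.factorial : ℝ) * S := by
          rw [Finset.sum_const, Finset.card_univ, Fintype.card_perm, Fintype.card_fin,
            nsmul_eq_mul]
  have ha : (d : ℝ) * a = (d.factorial : ℝ) * S := by
    rw [← hsumdiag, Finset.sum_congr rfl fun i _ => hdiag i, Finset.sum_const,
      Finset.card_univ, Fintype.card_fin, nsmul_eq_mul]
  -- row sums
  have hrow : ∀ i : Fin d, ∑ j, A i j = a + ((d : ℝ) - 1) * c := by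
    intro i
    rw [← Finset.add_sum_erase _ _ (Finset.mem_univ i), hdiag i]
    congr 1
    rw [Finset.sum_congr rfl (fun j hj => hoff i j (Ne.symm (Finset.mem_erase.mp hj).1)),
      Finset.sum_const, Finset.card_erase_of_mem (Finset.mem_univ i), Finset.card_univ,
      Fintype.card_fin, nsmul_eq_mul]
    congr 1
    push_cast [Nat.cast_sub (by omega : 1 ≤ d)]
    ring
  have htot : ∑ i : Fin d, ∑ j, A i j = 0 := by
    calc ∑ i : Fin d, ∑ j, A i j
        = ∑ i : Fin d, ∑ j, ∑ π : Equiv.Perm (Fin d), w (π i) * w (π j) := rfl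
      _ = ∑ i : Fin d, ∑ π : Equiv.Perm (Fin d), ∑ j, w (π i) * w (π j) :=
          Finset.sum_congr rfl fun i _ => Finset.sum_comm
      _ = ∑ π : Equiv.Perm (Fin d), ∑ i, ∑ j, w (π i) * w (π j) := Finset.sum_comm
      _ = ∑ π : Equiv.Perm (Fin d), (∑ i, w (π i)) * (∑ j, w (π j)) := by
          refine Finset.sum_congr rfl fun π _ => ?_
          rw [Finset.sum_mul_sum]
      _ = 0 := by
          refine Finset.sum_eq_zero fun π _ => ?_
          rw [Equiv.sum_comp π w, hw0, zero_mul]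
  have hc : a + ((d : ℝ) - 1) * c = 0 := by
    have h := htot
    rw [Finset.sum_congr rfl (fun i _ => hrow i), Finset.sum_const, Finset.card_univ,
      Fintype.card_fin, nsmul_eq_mul] at h
    have hd0 : (d : ℝ) ≠ 0 := Nat.cast_ne_zero.mpr (by omega)
    exact (mul_eq_zero.mp h).resolve_left hd0
  -- the main sum
  have hT : ∑ π : Equiv.Perm (Fin d), (∑ i, w i * w (π i)) ^ 2 = (a - c) * S := by
    calc ∑ π : Equiv.Perm (Fin d), (∑ i, w i * w (π i)) ^ 2
        = ∑ π : Equiv.Perm (Fin d), ∑ i, ∑ j, (w i * w j) * (w (π i) * w (π j)) := by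
          refine Finset.sum_congr rfl fun π _ => ?_
          rw [pow_two, Finset.sum_mul_sum]
          exact Finset.sum_congr rfl fun i _ => Finset.sum_congr rfl fun j _ => by ring
      _ = ∑ i, ∑ π : Equiv.Perm (Fin d), ∑ j, (w i * w j) * (w (π i) * w (π j)) :=
          Finset.sum_comm
      _ = ∑ i, ∑ j, (w i * w j) * A i j := by
          refine Finset.sum_congr rfl fun i _ => ?_
          rw [Finset.sum_comm]
          exact Finset.sum_congr rfl fun j _ => by rw [← Finset.mul_sum]
      _ = ∑ i, (a - c) * (w i) ^ 2 := by
          refine Finset.sum_congr rfl fun i _ => ?_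
          rw [← Finset.add_sum_erase _ _ (Finset.mem_univ i), hdiag i]
          have h1 : ∑ j ∈ Finset.univ.erase i, (w i * w j) * A i j
              = (w i * (0 - w i)) * c := by
            rw [Finset.sum_congr rfl (fun j hj => by
              rw [hoff i j (Ne.symm (Finset.mem_erase.mp hj).1)]),
              ← Finset.sum_mul, ← Finset.mul_sum,
              Finset.sum_erase_eq_sub (Finset.mem_univ i), hw0]
          rw [h1]
          ring
      _ = (a - c) * S := by rw [← Finset.mul_sum]
  rw [hT]
  have hF : (d.factorial : ℝ) ≠ 0 := Nat.cast_ne_zero.mpr d.factorial_ne_zero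
  have hd1 : (d : ℝ) - 1 ≠ 0 := by
    have h2 : (2 : ℝ) ≤ (d : ℝ) := by exact_mod_cast hd2
    linarith
  field_simp
  linear_combination S * ha - S * hc
end

section
/- Let n, n' ≥ 1, d = n + n', and w ∈ ℝ^d with wᵢ = −1/n for i ≤ n and wᵢ = 1/n' for i > n. If Π is a uniformly random d×d permutation matrix, then for any l > 0: P(wᵀΠw ≥ l·‖w‖₂²) ≤ 1 / ((d−1)·l²). -/
open Finset Equiv

private lemma fiber1_eq' (d : ℕ) (i k k' : Fin d) :
    (univ.filter (fun π : Perm (Fin d) => π i = k)).card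
      = (univ.filter (fun π : Perm (Fin d) => π i = k')).card := by
  apply Finset.card_bij' (fun π _ => Equiv.swap k k' * π) (fun π _ => Equiv.swap k k' * π)
  · intro π hπ; simp only [mem_filter, mem_univ, true_and] at *
    simp [Equiv.Perm.mul_apply, hπ]
  · intro π hπ; simp only [mem_filter, mem_univ, true_and] at *
    simp [Equiv.Perm.mul_apply, hπ, Equiv.swap_apply_right]
  · intro π _; simp [← mul_assoc]
  · intro π _; simp [← mul_assoc]

private lemma fiber1' (d : ℕ) (hd : 0 < d) (i k : Fin d) :
    (univ.filter (fun π : Perm (Fin d) => π i = k)).card = (d-1).factorial := by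
  have hsum : ∑ m : Fin d, (univ.filter (fun π : Perm (Fin d) => π i = m)).card
      = d.factorial := by
    rw [← Finset.card_eq_sum_card_fiberwise (fun π _ => Finset.mem_univ (π i))]
    simp [Fintype.card_perm]
  have heq : ∀ m : Fin d, (univ.filter (fun π : Perm (Fin d) => π i = m)).card
      = (univ.filter (fun π : Perm (Fin d) => π i = k)).card :=
    fun m => fiber1_eq' d i m k
  rw [Finset.sum_congr rfl (fun m _ => heq m), Finset.sum_const, Finset.card_univ,
    Fintype.card_fin, smul_eq_mul] at hsum
  exact Nat.eq_of_mul_eq_mul_left hd (hsum.trans (Nat.mul_factorial_pred (by omega)).symm)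

private lemma exists_perm_pair' {α : Type*} [DecidableEq α] {k m k' m' : α}
    (h1 : k ≠ m) (h2 : k' ≠ m') : ∃ σ : Equiv.Perm α, σ k = k' ∧ σ m = m' := by
  refine ⟨Equiv.swap (Equiv.swap k k' m) m' * Equiv.swap k k', ?_, ?_⟩
  · have hne1 : Equiv.swap k k' m ≠ k' := by
      intro h
      exact h1 ((Equiv.swap k k').injective (h.trans (Equiv.swap_apply_left k k').symm)).symm
    simp only [Equiv.Perm.mul_apply, Equiv.swap_apply_left]
    exact Equiv.swap_apply_of_ne_of_ne hne1.symm h2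
  · simp [Equiv.Perm.mul_apply]

private lemma fiber2_eq' (d : ℕ) (i j : Fin d) {k m k' m' : Fin d} (hkm : k ≠ m)
    (hkm' : k' ≠ m') :
    (univ.filter (fun π : Perm (Fin d) => π i = k ∧ π j = m)).card
      = (univ.filter (fun π : Perm (Fin d) => π i = k' ∧ π j = m')).card := by
  obtain ⟨σ, hσ1, hσ2⟩ := exists_perm_pair' hkm hkm'
  apply Finset.card_bij' (fun π _ => σ * π) (fun π _ => σ⁻¹ * π)
  · intro π hπ; simp only [mem_filter, mem_univ, true_and] at *
    simp [Equiv.Perm.mul_apply, hπ.1, hπ.2, hσ1, hσ2]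
  · intro π hπ; simp only [mem_filter, mem_univ, true_and] at *
    constructor
    · simp [Equiv.Perm.mul_apply, hπ.1, ← hσ1]
    · simp [Equiv.Perm.mul_apply, hπ.2, ← hσ2]
  · intro π _; simp [← mul_assoc]
  · intro π _; simp [← mul_assoc]

private lemma fiber2' (d : ℕ) (hd : 2 ≤ d) {i j : Fin d} (hij : i ≠ j) {k m : Fin d}
    (hkm : k ≠ m) :
    (univ.filter (fun π : Perm (Fin d) => π i = k ∧ π j = m)).card = (d-2).factorial := by
  have hsum : ∑ p ∈ (univ : Finset (Fin d)).offDiag,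
      (univ.filter (fun π : Perm (Fin d) => (π i, π j) = p)).card = d.factorial := by
    rw [← Finset.card_eq_sum_card_fiberwise
      (fun π _ => by simp [Finset.mem_offDiag, fun h => hij (π.injective h), hij] :
        ∀ π : Perm (Fin d), π ∈ univ → (π i, π j) ∈ (univ : Finset (Fin d)).offDiag)]
    simp [Fintype.card_perm]
  have heq : ∀ p ∈ (univ : Finset (Fin d)).offDiag,
      (univ.filter (fun π : Perm (Fin d) => (π i, π j) = p)).card
        = (univ.filter (fun π : Perm (Fin d) => π i = k ∧ π j = m)).card := by
    rintro ⟨a, b⟩ hp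
    simp only [Finset.mem_offDiag] at hp
    simp only [Prod.mk.injEq]
    exact fiber2_eq' d i j hp.2.2 hkm
  rw [Finset.sum_congr rfl heq, Finset.sum_const, smul_eq_mul, Finset.offDiag_card,
    Finset.card_univ, Fintype.card_fin] at hsum
  have hkey : (d * d - d) * (d-2).factorial = d.factorial := by
    have h1 : (d-1) * (d-1-1).factorial = (d-1).factorial :=
      Nat.mul_factorial_pred (by omega)
    have h2 : d * (d-1).factorial = d.factorial := Nat.mul_factorial_pred (by omega)
    have h3 : d - 1 - 1 = d - 2 := by omega
    obtain ⟨e, rfl⟩ : ∃ e, d = e + 2 := ⟨d - 2, by omega⟩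
    have h4 : (e+2) * (e+2) - (e+2) = (e+2) * (e+2 - 1) := by
      have h : e + 2 - 1 = e + 1 := rfl
      rw [h]
      have : (e+2)*(e+2) = (e+2)*(e+1)+(e+2) := by ring
      omega
    rw [h4, mul_assoc, h3.symm, h1, h2]
  have hpos : 0 < d * d - d := by
    obtain ⟨e, rfl⟩ : ∃ e, d = e + 2 := ⟨d - 2, by omega⟩
    have h1 : (e+2)*(e+2) = (e+2)*(e+1)+(e+2) := by ring
    have h2 : 1 ≤ (e+2)*(e+1) := Nat.one_le_iff_ne_zero.mpr (by positivity)
    omega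
  exact Nat.eq_of_mul_eq_mul_left hpos (hsum.trans hkey.symm)

private lemma T_diag' (d : ℕ) (hd : 0 < d) (w : Fin d → ℝ) (i : Fin d) :
    ∑ π : Perm (Fin d), w (π i) * w (π i)
      = ((d-1).factorial : ℝ) * ∑ k, w k * w k := by
  rw [← Finset.sum_fiberwise_of_maps_to (g := fun π : Perm (Fin d) => π i)
    (fun π _ => Finset.mem_univ (π i)) (fun π => w (π i) * w (π i)), Finset.mul_sum]
  refine Finset.sum_congr rfl fun k _ => ?_
  have h1 : ∑ π ∈ univ.filter (fun π : Perm (Fin d) => π i = k), w (π i) * w (π i)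
      = ∑ _π ∈ univ.filter (fun π : Perm (Fin d) => π i = k), w k * w k :=
    Finset.sum_congr rfl fun π hπ => by rw [(Finset.mem_filter.mp hπ).2]
  rw [h1, Finset.sum_const, fiber1' d hd i k, nsmul_eq_mul]

private lemma T_off' (d : ℕ) (hd : 2 ≤ d) (w : Fin d → ℝ) {i j : Fin d} (hij : i ≠ j) :
    ∑ π : Perm (Fin d), w (π i) * w (π j)
      = ((d-2).factorial : ℝ) * ∑ p ∈ (univ : Finset (Fin d)).offDiag, w p.1 * w p.2 := by
  rw [← Finset.sum_fiberwise_of_maps_to (g := fun π : Perm (Fin d) => (π i, π j))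
    (fun π _ => by simp [Finset.mem_offDiag, fun h => hij (π.injective h), hij] :
      ∀ π : Perm (Fin d), π ∈ univ → (π i, π j) ∈ (univ : Finset (Fin d)).offDiag)
    (fun π => w (π i) * w (π j)), Finset.mul_sum]
  refine Finset.sum_congr rfl fun p hp => ?_
  have hpne : p.1 ≠ p.2 := (Finset.mem_offDiag.mp hp).2.2
  have h1 : ∑ π ∈ univ.filter (fun π : Perm (Fin d) => (π i, π j) = p), w (π i) * w (π j)
      = ∑ _π ∈ univ.filter (fun π : Perm (Fin d) => (π i, π j) = p), w p.1 * w p.2 :=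
    Finset.sum_congr rfl fun π hπ => by
      have h := (Finset.mem_filter.mp hπ).2
      rw [Prod.ext_iff] at h
      simp only at h
      rw [h.1, h.2]
  rw [h1, Finset.sum_const, nsmul_eq_mul]
  congr 1
  have h2 : (univ.filter (fun π : Perm (Fin d) => (π i, π j) = p))
      = (univ.filter (fun π : Perm (Fin d) => π i = p.1 ∧ π j = p.2)) :=
    Finset.filter_congr fun π _ => by rw [Prod.ext_iff]
  rw [h2]
  exact_mod_cast congrArg Nat.cast (fiber2' d hd hij hpne)

private lemma second_moment' (d : ℕ) (hd : 2 ≤ d) (w : Fin d → ℝ) (hw0 : ∑ i, w i = 0) :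
    ∑ π : Perm (Fin d), (∑ i, w i * w (π i))^2
      = ((d * (d-2).factorial : ℕ) : ℝ) * (∑ i, w i * w i)^2 := by
  have hd0 : 0 < d := by omega
  set A : ℝ := ∑ i, w i * w i with hA
  have hoff : ∑ p ∈ (univ : Finset (Fin d)).offDiag, w p.1 * w p.2 = -A := by
    have htot : ∑ p ∈ (univ : Finset (Fin d)) ×ˢ univ, w p.1 * w p.2 = 0 := by
      rw [Finset.sum_product, ← Finset.sum_mul_sum, hw0, zero_mul]
    rw [← Finset.diag_union_offDiag, Finset.sum_union (Finset.disjoint_diag_offDiag _),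
      Finset.sum_diag] at htot
    linarith [htot]
  have hexp : ∀ π : Perm (Fin d), (∑ i, w i * w (π i))^2
      = ∑ i, ∑ j, (w i * w j) * (w (π i) * w (π j)) := by
    intro π
    rw [sq, Finset.sum_mul_sum]
    exact Finset.sum_congr rfl fun i _ => Finset.sum_congr rfl fun j _ => by ring
  rw [Finset.sum_congr rfl fun π _ => hexp π]
  rw [Finset.sum_comm]
  have hswap : ∀ i : Fin d, ∑ π : Perm (Fin d), ∑ j, (w i * w j) * (w (π i) * w (π j))
      = ∑ j, (w i * w j) * ∑ π : Perm (Fin d), (w (π i) * w (π j)) := by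
    intro i
    rw [Finset.sum_comm]
    exact Finset.sum_congr rfl fun j _ => by rw [Finset.mul_sum]
  rw [Finset.sum_congr rfl fun i _ => hswap i]
  rw [← Finset.sum_product']
  rw [← Finset.diag_union_offDiag, Finset.sum_union (Finset.disjoint_diag_offDiag _),
    Finset.sum_diag]
  have hdiag : ∑ i : Fin d, (w i * w i) * ∑ π : Perm (Fin d), (w (π i) * w (π i))
      = ((d-1).factorial : ℝ) * A^2 := by
    rw [Finset.sum_congr rfl fun i _ => by rw [T_diag' d hd0 w i]]
    rw [← Finset.sum_mul, ← hA]; ring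
  have hoffsum : ∑ p ∈ (univ : Finset (Fin d)).offDiag,
      (w p.1 * w p.2) * ∑ π : Perm (Fin d), (w (π p.1) * w (π p.2))
      = ((d-2).factorial : ℝ) * A^2 := by
    have : ∀ p ∈ (univ : Finset (Fin d)).offDiag,
        (w p.1 * w p.2) * ∑ π : Perm (Fin d), (w (π p.1) * w (π p.2))
        = (w p.1 * w p.2) * (((d-2).factorial : ℝ) * (-A)) := by
      intro p hp
      rw [T_off' d hd w (Finset.mem_offDiag.mp hp).2.2, hoff]
    rw [Finset.sum_congr rfl this, ← Finset.sum_mul, hoff]; ring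
  rw [hdiag, hoffsum]
  have hnat : (d * (d-2).factorial : ℕ) = (d-1).factorial + (d-2).factorial := by
    obtain ⟨e, he⟩ : ∃ e, d = e + 2 := ⟨d - 2, by omega⟩
    subst he
    simp only [show e + 2 - 2 = e from by omega, show e + 2 - 1 = e + 1 from by omega,
      Nat.factorial_succ]
    ring
  rw [hnat]
  push_cast
  ring

private lemma fact_cast_lemma (d : ℕ) (hd : 2 ≤ d) :
    ((d * (d-2).factorial : ℕ) : ℝ) * ((d:ℝ) - 1) = (d.factorial : ℝ) := by
  obtain ⟨e, he⟩ : ∃ e, d = e + 2 := ⟨d - 2, by omega⟩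
  subst he
  have h : (e + 2).factorial = ((e+2) * (e+2-2).factorial) * (e+2-1) := by
    simp only [show e + 2 - 2 = e from by omega, show e + 2 - 1 = e + 1 from by omega,
      Nat.factorial_succ]
    ring
  rw [h]
  push_cast
  ring

/-- Let `d = n + n'` and `w ∈ ℝ^d` with `wᵢ = -1/n` for `i ≤ n` and `wᵢ = 1/n'`
otherwise. For a uniformly random permutation matrix `Π` and any `l > 0`,
`P(wᵀ Π w ≥ l ‖w‖₂²) ≤ 1 / ((d-1) l²)`. The probability is the fraction of
the `d!` permutations satisfying the inequality. -/
theorem permutation_quadratic_form_tail_bound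
    (n n' : ℕ) (hn : 1 ≤ n) (hn' : 1 ≤ n') (l : ℝ) (hl : 0 < l) :
    let d := n + n'
    let w : Fin d → ℝ := fun i => if (i : ℕ) < n then -1 / n else 1 / n'
    ((Finset.univ.filter
        (fun π : Equiv.Perm (Fin d) =>
          l * ∑ i, (w i) ^ 2 ≤ ∑ i, w i * w (π i))).card : ℝ) /
        (Nat.factorial d : ℝ) ≤
      1 / (((d : ℝ) - 1) * l ^ 2) := by
  intro d w
  have hd : 2 ≤ d := by omega
  have hn0 : (n : ℝ) ≠ 0 := Nat.cast_ne_zero.mpr (by omega)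
  have hn'0 : (n' : ℝ) ≠ 0 := Nat.cast_ne_zero.mpr (by omega)
  -- sum of w is zero
  have hw0 : ∑ i, w i = 0 := by
    have h1 : ∑ i : Fin d, w i
        = ∑ k ∈ Finset.range d, (if k < n then (-1 : ℝ) / n else 1 / n') :=
      Fin.sum_univ_eq_sum_range (fun k => if k < n then (-1 : ℝ) / n else 1 / n') d
    rw [h1, Finset.sum_ite, Finset.sum_const, Finset.sum_const]
    have h2 : (Finset.range d).filter (fun k => k < n) = Finset.range n := by
      ext k; simp only [Finset.mem_filter, Finset.mem_range]; omega
    have h3 : ((Finset.range d).filter (fun k => ¬ k < n)).card = n' := by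
      rw [Finset.filter_not, h2,
        Finset.card_sdiff_of_subset (Finset.range_subset_range.mpr (by omega : n ≤ d)),
        Finset.card_range, Finset.card_range]
      omega
    rw [h2, h3, Finset.card_range, nsmul_eq_mul, nsmul_eq_mul]
    field_simp
    norm_num
  -- positivity of the squared norm
  have hApos : 0 < ∑ i, (w i) ^ 2 := by
    have h0 : (⟨0, by omega⟩ : Fin d) ∈ (Finset.univ : Finset (Fin d)) := Finset.mem_univ _
    have hle : (w ⟨0, by omega⟩) ^ 2 ≤ ∑ i, (w i) ^ 2 :=
      Finset.single_le_sum (fun i _ => sq_nonneg (w i)) h0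
    have hw0' : w ⟨0, by omega⟩ = -1 / n := by
      simp only [w]
      rw [if_pos]
      exact by omega
    rw [hw0'] at hle
    have : (0:ℝ) < (-1 / n) ^ 2 := by positivity
    linarith
  set A : ℝ := ∑ i, (w i) ^ 2 with hA
  have hAww : A = ∑ i, w i * w i := by
    rw [hA]; exact Finset.sum_congr rfl fun i _ => sq (w i) ▸ by ring
  set F := Finset.univ.filter
      (fun π : Equiv.Perm (Fin d) => l * A ≤ ∑ i, w i * w (π i)) with hF
  -- Markov / Chebyshev step
  have hmark : (F.card : ℝ) * (l * A) ^ 2 ≤ ∑ π : Equiv.Perm (Fin d),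
      (∑ i, w i * w (π i)) ^ 2 := by
    have h1 : F.card • ((l * A) ^ 2) ≤ ∑ π ∈ F, (∑ i, w i * w (π i)) ^ 2 := by
      apply Finset.card_nsmul_le_sum
      intro π hπ
      have hπ' := (Finset.mem_filter.mp hπ).2
      exact pow_le_pow_left₀ (by positivity) hπ' 2
    have h2 : ∑ π ∈ F, (∑ i, w i * w (π i)) ^ 2
        ≤ ∑ π : Equiv.Perm (Fin d), (∑ i, w i * w (π i)) ^ 2 :=
      Finset.sum_le_sum_of_subset_of_nonneg (Finset.filter_subset _ _)
        (fun π _ _ => sq_nonneg _)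
    rw [nsmul_eq_mul] at h1
    linarith
  have hsm := second_moment' d hd w hw0
  rw [← hAww] at hsm
  rw [hsm] at hmark
  -- cancel A^2
  have hkey : (F.card : ℝ) * l ^ 2 ≤ ((d * (d-2).factorial : ℕ) : ℝ) := by
    have hA2 : (0:ℝ) < A ^ 2 := by positivity
    have : (F.card : ℝ) * l ^ 2 * A ^ 2 ≤ ((d * (d-2).factorial : ℕ) : ℝ) * A ^ 2 := by
      calc (F.card : ℝ) * l ^ 2 * A ^ 2 = (F.card : ℝ) * (l * A) ^ 2 := by ring
        _ ≤ _ := hmark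
    exact le_of_mul_le_mul_right this hA2
  -- final algebra
  have hdpos : (0:ℝ) < (d.factorial : ℝ) := by positivity
  have hd1pos : (0:ℝ) < ((d:ℝ) - 1) * l ^ 2 := by
    have : (2:ℝ) ≤ (d:ℝ) := by exact_mod_cast hd
    have : (0:ℝ) < (d:ℝ) - 1 := by linarith
    positivity
  rw [div_le_div_iff₀ hdpos hd1pos]
  have hfact : ((d * (d-2).factorial : ℕ) : ℝ) * ((d:ℝ) - 1) = (d.factorial : ℝ) :=
    fact_cast_lemma d hd
  calc (F.card : ℝ) * (((d:ℝ) - 1) * l ^ 2)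
      = ((F.card : ℝ) * l ^ 2) * ((d:ℝ) - 1) := by ring
    _ ≤ ((d * (d-2).factorial : ℕ) : ℝ) * ((d:ℝ) - 1) := by
        apply mul_le_mul_of_nonneg_right hkey
        have : (2:ℝ) ≤ (d:ℝ) := by exact_mod_cast hd
        linarith
    _ = (d.factorial : ℝ) := hfact
    _ = 1 * (d.factorial : ℝ) := (one_mul _).symm
end
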